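/- Suppose l/(l+1) < k/n and n ≥ 2l+3. Then every maximal simplex of the boundary of the cyclic polytope C_{2l+2}(n) (characterized by Gale's evenness condition as a disjoint union of l+1 cyclic blocks of two consecutive elements of Z/n) is a face of N(n,k). -/
import Mathlib


/-- The discrete circular arc `[i, i+k]ₙ ⊆ ℤ/n`. -/
def cyclicArc (n k : ℕ) (i : ZMod n) : Finset (ZMod n) :=
  (Finset.range (k + 1)).image (fun j : ℕ => i + (j : ZMod n))

/-- `σ` is a face of the nerve complex `N(n,k)`: it is contained in some cyclic
interval `[i, i+k]ₙ`. -/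
def IsFaceN (n k : ℕ) (σ : Finset (ZMod n)) : Prop :=
  ∃ i : ZMod n, σ ⊆ cyclicArc n k i

lemma card_val_ge (n k : ℕ) [NeZero n] :
    (Finset.univ.filter fun u : ZMod n => k ≤ u.val).card = n - k := by
  have himg : (Finset.univ.filter fun u : ZMod n => k ≤ u.val).image ZMod.val
      = Finset.Ico k n := by
    ext m
    simp only [Finset.mem_image, Finset.mem_filter, Finset.mem_univ, true_and,
      Finset.mem_Ico]
    constructor
    · rintro ⟨u, hu, rfl⟩
      exact ⟨hu, ZMod.val_lt u⟩
    · rintro ⟨h1, h2⟩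
      exact ⟨(m : ZMod n), by rw [ZMod.val_cast_of_lt h2]; exact h1,
        ZMod.val_cast_of_lt h2⟩
  have := Finset.card_image_of_injective
    (Finset.univ.filter fun u : ZMod n => k ≤ u.val) (ZMod.val_injective n)
  rw [himg, Nat.card_Ico] at this
  omega

/-- if `l/(l+1) < k/n` and `n ≥ 2l+3`, then every maximal simplex of
`∂C_{2l+2}(n)` — by Gale's evenness condition, a disjoint union of `l+1` pairwise
disjoint cyclic blocks `{i, i+1} ⊆ ℤ/n` — is a face of `N(n,k)`. -/
theorem cyclicPolytope_facet_mem_nerve (n k l : ℕ) [NeZero n]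
    (hfrac : l * n < k * (l + 1)) (hn : 2 * l + 3 ≤ n)
    (σ : Finset (ZMod n)) (g : Fin (l + 1) → ZMod n)
    (hdisj : ∀ i j : Fin (l + 1), i ≠ j →
      Disjoint ({g i, g i + 1} : Finset (ZMod n)) ({g j, g j + 1} : Finset (ZMod n)))
    (hσ : σ = Finset.univ.biUnion (fun i : Fin (l + 1) => ({g i, g i + 1} : Finset (ZMod n)))) :
    IsFaceN n k σ := by
  rcases le_or_gt n k with hk | hk
  · -- the arc is everything
    refine ⟨0, fun x _ => ?_⟩
    simp only [cyclicArc, Finset.mem_image, Finset.mem_range]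
    refine ⟨x.val, ?_, by simp [ZMod.natCast_val, ZMod.cast_id]⟩
    have := ZMod.val_lt x
    omega
  · -- counting argument
    set Bad : Finset (ZMod n) :=
      Finset.univ.filter (fun i : ZMod n => ∃ t : Fin (l + 1), k ≤ (g t - i).val) with hBad
    have hsub : Bad ⊆ Finset.univ.biUnion
        (fun t : Fin (l + 1) => Finset.univ.filter fun i : ZMod n => k ≤ (g t - i).val) := by
      intro i hi
      simp only [hBad, Finset.mem_filter, Finset.mem_univ, true_and] at hi
      obtain ⟨t, ht⟩ := hi
      simp only [Finset.mem_biUnion, Finset.mem_filter, Finset.mem_univ, true_and]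
      exact ⟨t, ht⟩
    have hcard_t : ∀ t : Fin (l + 1),
        (Finset.univ.filter fun i : ZMod n => k ≤ (g t - i).val).card = n - k := by
      intro t
      have : (Finset.univ.filter fun i : ZMod n => k ≤ (g t - i).val)
          = (Finset.univ.filter fun u : ZMod n => k ≤ u.val).image (fun u => g t - u) := by
        ext i
        simp only [Finset.mem_filter, Finset.mem_univ, true_and, Finset.mem_image]
        constructor
        · intro h
          exact ⟨g t - i, by simpa using h, by ring⟩
        · rintro ⟨u, hu, rfl⟩
          simpa using hu
      rw [this, Finset.card_image_of_injective _ (sub_right_injective), card_val_ge]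
    have hBadcard : Bad.card < n := by
      calc Bad.card ≤ ∑ t : Fin (l + 1),
            (Finset.univ.filter fun i : ZMod n => k ≤ (g t - i).val).card :=
            (Finset.card_le_card hsub).trans (Finset.card_biUnion_le)
        _ = (l + 1) * (n - k) := by simp [hcard_t, Finset.sum_const, mul_comm]
        _ < n := by
            have h1 : (l + 1) * (n - k) = (l + 1) * n - (l + 1) * k :=
              Nat.mul_sub (l + 1) n k
            have h2 : (l + 1) * n = l * n + n := by ring
            have h3 : (l + 1) * k = k * (l + 1) := by ring
            omega
    obtain ⟨i, hi⟩ : ∃ i : ZMod n, i ∉ Bad := by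
      by_contra h
      push_neg at h
      have : Finset.univ ⊆ Bad := fun i _ => h i
      have := Finset.card_le_card this
      simp [ZMod.card] at this
      omega
    simp only [hBad, Finset.mem_filter, Finset.mem_univ, true_and, not_exists, not_le] at hi
    refine ⟨i, fun x hx => ?_⟩
    rw [hσ] at hx
    simp only [Finset.mem_biUnion, Finset.mem_univ, true_and, Finset.mem_insert,
      Finset.mem_singleton] at hx
    obtain ⟨t, hx⟩ := hx
    have hval : ((((g t - i).val : ℕ)) : ZMod n) = g t - i := by
      simp [ZMod.natCast_val, ZMod.cast_id]
    simp only [cyclicArc, Finset.mem_image, Finset.mem_range]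
    rcases hx with rfl | rfl
    · exact ⟨(g t - i).val, by have := hi t; omega, by rw [hval]; ring⟩
    · exact ⟨(g t - i).val + 1, by have := hi t; omega,
        by push_cast [hval]; ring⟩
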